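/- For the loop potential W = x₁^{a₁}x₂ + x₂^{a₂}x₃ + ⋯ + x_{n-1}^{a_{n-1}}xₙ + xₙ^{aₙ}x₁, the group Aut(W) = A⁻¹ℤ^n/ℤ^n is cyclic of order a₁⋯aₙ + (−1)^{n+1}. -/

import Mathlib

open Matrix QuotientAddGroup

noncomputable section

def IntLat (n : ℕ) : AddSubgroup (Fin n → ℚ) where
  carrier := {v | ∀ i, ∃ m : ℤ, v i = (m : ℚ)}
  add_mem' := by
    intro a b ha hb i
    obtain ⟨p, hp⟩ := ha i
    obtain ⟨q, hq⟩ := hb i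
    exact ⟨p + q, by simp [hp, hq]⟩
  zero_mem' := fun i => ⟨0, by simp⟩
  neg_mem' := by
    intro a ha i
    obtain ⟨p, hp⟩ := ha i
    exact ⟨-p, by simp [hp]⟩

abbrev QuotLat (n : ℕ) := (Fin n → ℚ) ⧸ IntLat n

def ratMat {n : ℕ} (A : Matrix (Fin n) (Fin n) ℤ) : Matrix (Fin n) (Fin n) ℚ :=
  A.map ((↑) : ℤ → ℚ)

def AutW {n : ℕ} (A : Matrix (Fin n) (Fin n) ℤ) : AddSubgroup (QuotLat n) :=
  (AddSubgroup.comap (ratMat A).mulVecLin.toAddMonoidHom (IntLat n)).map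
    (QuotientAddGroup.mk' (IntLat n))

def ZinQ : AddSubgroup ℚ := (Int.castAddHom ℚ).range

def sumHom (n : ℕ) : (Fin n → ℚ) →+ ℚ :=
  AddMonoidHom.mk' (fun v => ∑ i, v i) (by
    intro a b
    simpa using Finset.sum_add_distrib)

def qsum (n : ℕ) : QuotLat n →+ ℚ ⧸ ZinQ :=
  QuotientAddGroup.lift (IntLat n) ((QuotientAddGroup.mk' ZinQ).comp (sumHom n)) (by
    intro v hv
    have hv' : ∀ i, ∃ m : ℤ, v i = (m : ℚ) := hv
    choose m hm using hv'
    have hmem : (∑ i, v i) ∈ ZinQ := ⟨∑ i, m i, by push_cast [hm]; simp⟩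
    simpa [sumHom] using (QuotientAddGroup.eq_zero_iff _).mpr hmem)

def SLW {n : ℕ} (A : Matrix (Fin n) (Fin n) ℤ) : AddSubgroup (QuotLat n) :=
  AutW A ⊓ (qsum n).ker

def WellFormedWeights {n : ℕ} (w : Fin n → ℤ) (d : ℤ) : Prop :=
  (∀ i, Finset.gcd (Finset.univ.erase i) w = 1) ∧
  ∀ i j, i ≠ j → ((Finset.gcd ((Finset.univ.erase i).erase j) w) ∣ d)

private lemma loop_mod_ne {n : ℕ} (hn : 2 ≤ n) (i : Fin n) : ((i:ℕ)+1) % n ≠ (i:ℕ) := by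
  intro h
  have hi := i.isLt
  rcases Nat.lt_or_ge ((i : ℕ) + 1) n with h1 | h1
  · rw [Nat.mod_eq_of_lt h1] at h; omega
  · have h2 : (i : ℕ) + 1 = n := by omega
    rw [h2, Nat.mod_self] at h; omega

private lemma loop_row {n : ℕ} (hn : 2 ≤ n) (a : Fin n → ℕ)
    (A : Matrix (Fin n) (Fin n) ℤ)
    (hAdef : A = Matrix.of fun i j => if j = i then (a i : ℤ) else if (j : ℕ) = ((i : ℕ) + 1) % n then 1 else 0)
    (i : Fin n) (u : Fin n → ℚ) :
    (ratMat A *ᵥ u) i = (a i : ℚ) * u i + u ⟨((i : ℕ) + 1) % n, Nat.mod_lt _ (by omega)⟩ := by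
  have hnpos : 0 < n := by omega
  have hAi : (ratMat A) i
      = Pi.single i ((a i : ℚ)) + Pi.single (⟨((i:ℕ)+1)%n, Nat.mod_lt _ hnpos⟩ : Fin n) 1 := by
    funext j
    simp only [ratMat, Matrix.map_apply, hAdef, Matrix.of_apply, Pi.add_apply, Pi.single_apply]
    by_cases h1 : j = i
    · have h3 : ¬ (i = (⟨((i:ℕ)+1)%n, Nat.mod_lt _ hnpos⟩ : Fin n)) := by
        intro h
        exact loop_mod_ne hn i (congrArg Fin.val h).symm
      simp [h1, h3]
    · by_cases h2 : (j : ℕ) = ((i:ℕ)+1)%n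
      · have h3 : j = (⟨((i:ℕ)+1)%n, Nat.mod_lt _ hnpos⟩ : Fin n) := Fin.ext h2
        have h4 : (⟨((i:ℕ)+1)%n, Nat.mod_lt _ hnpos⟩ : Fin n) ≠ i :=
          fun h => loop_mod_ne hn i (congrArg Fin.val h)
        simp [h1, h2, h3, h4]
      · have h3 : ¬ (j = (⟨((i:ℕ)+1)%n, Nat.mod_lt _ hnpos⟩ : Fin n)) := by
          intro h
          exact h2 (congrArg Fin.val h)
        simp [h1, h2, h3]
  have h0 : (ratMat A *ᵥ u) i = (ratMat A) i ⬝ᵥ u := rfl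
  rw [h0, hAi, add_dotProduct, single_dotProduct, single_dotProduct, one_mul]

private lemma loop_D_ne {n : ℕ} (hn : 2 ≤ n) (a : Fin n → ℕ) (ha : ∀ i, 1 ≤ a i)
    (A : Matrix (Fin n) (Fin n) ℤ)
    (hAdef : A = Matrix.of fun i j => if j = i then (a i : ℤ) else if (j : ℕ) = ((i : ℕ) + 1) % n then 1 else 0)
    (hA : A.det ≠ 0) (hP1 : 1 ≤ ∏ i, (a i : ℤ)) :
    (∏ i, (a i : ℤ)) + (-1)^(n+1) ≠ 0 := by
  have hnpos : 0 < n := by omega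
  intro hD
  set P : ℤ := ∏ i, (a i : ℤ) with hP
  have hpar : (-1:ℤ)^(n+1) = -1 ∧ P = 1 := by
    rcases Nat.even_or_odd n with he | ho
    · have h1 : (-1:ℤ)^(n+1) = -1 := Odd.neg_one_pow (Even.add_one he)
      exact ⟨h1, by omega⟩
    · have h1 : (-1:ℤ)^(n+1) = 1 := Even.neg_one_pow (Odd.add_one ho)
      omega
  obtain ⟨hsign, hPone⟩ := hpar
  have hneven : Even n := by
    rcases Nat.even_or_odd n with he | ho
    · exact he
    · exfalso
      have h1 : (-1:ℤ)^(n+1) = 1 := Even.neg_one_pow (Odd.add_one ho)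
      omega
  have haone : ∀ i, a i = 1 := by
    have hprod : (∏ i, a i) = 1 := by
      have h2 : ((∏ i, a i : ℕ) : ℤ) = 1 := by push_cast [← hP]; exact_mod_cast hPone
      exact_mod_cast h2
    intro i
    exact Nat.dvd_one.mp (hprod ▸ Finset.dvd_prod_of_mem a (Finset.mem_univ i))
  have hdetq : (ratMat A).det ≠ 0 := by
    have h1 : (ratMat A).det = ((A.det : ℚ)) := by
      rw [show ratMat A = (Int.castRingHom ℚ).mapMatrix A from rfl, ← RingHom.map_det]
      rfl
    rw [h1]
    exact_mod_cast hA
  have hdetu : IsUnit (ratMat A).det := isUnit_iff_ne_zero.mpr hdetq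
  obtain ⟨B, hBA⟩ : ∃ B, B * ratMat A = 1 := ⟨(ratMat A)⁻¹, Matrix.nonsing_inv_mul _ hdetu⟩
  set x : Fin n → ℚ := fun i => (-1)^(i:ℕ) with hx
  have hxker : ratMat A *ᵥ x = 0 := by
    funext i
    rw [loop_row hn a A hAdef, haone i]
    have hi := i.isLt
    rcases Nat.lt_or_ge ((i:ℕ)+1) n with h1 | h1
    · have hmod : ((i:ℕ)+1)%n = (i:ℕ)+1 := Nat.mod_eq_of_lt h1
      show ((1:ℕ):ℚ) * (-1)^(i:ℕ) + (-1)^((⟨((i:ℕ)+1)%n, Nat.mod_lt _ hnpos⟩ : Fin n) : ℕ) = 0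
      rw [show ((⟨((i:ℕ)+1)%n, Nat.mod_lt _ hnpos⟩ : Fin n) : ℕ) = (i:ℕ)+1 from hmod]
      push_cast
      ring
    · have h2 : (i:ℕ) + 1 = n := by omega
      have hmod : ((i:ℕ)+1)%n = 0 := by rw [h2, Nat.mod_self]
      show ((1:ℕ):ℚ) * (-1)^(i:ℕ) + (-1)^((⟨((i:ℕ)+1)%n, Nat.mod_lt _ hnpos⟩ : Fin n) : ℕ) = 0
      rw [show ((⟨((i:ℕ)+1)%n, Nat.mod_lt _ hnpos⟩ : Fin n) : ℕ) = 0 from hmod]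
      have hodd : Odd (i:ℕ) := by
        obtain ⟨k, hk⟩ := hneven
        refine ⟨k - 1, by omega⟩
      rw [Odd.neg_one_pow hodd]
      norm_num
  have hx0 : x = 0 := by
    have h1 : x = (B * ratMat A) *ᵥ x := by rw [hBA, one_mulVec]
    rw [h1, ← mulVec_mulVec, hxker, mulVec_zero]
  have h2 := congrFun hx0 ⟨0, hnpos⟩
  rw [hx] at h2
  norm_num at h2

set_option maxHeartbeats 1000000 in
private lemma loop_Av {n : ℕ} (hn : 2 ≤ n) (a : Fin n → ℕ)
    (A : Matrix (Fin n) (Fin n) ℤ)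
    (hAdef : A = Matrix.of fun i j => if j = i then (a i : ℤ) else if (j : ℕ) = ((i : ℕ) + 1) % n then 1 else 0)
    (D : ℤ) (hDq : ((D : ℚ)) ≠ 0) (pZ : ℕ → ℤ)
    (hpZsucc : ∀ m : ℕ, ∀ hm : m < n, pZ (m+1) = pZ m * (a ⟨m, hm⟩ : ℤ))
    (hpZ0 : pZ 0 = 1)
    (hDcast : (D : ℚ) = (pZ n : ℚ) + (-1)^(n+1))
    (v : Fin n → ℚ)
    (hv : v = fun i : Fin n => ((-1)^(n+1) * (-1)^((i : ℕ)) * (pZ (i : ℕ) : ℚ)) / (D : ℚ)) :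
    ratMat A *ᵥ v = Pi.single (⟨n-1, by omega⟩ : Fin n) 1 := by
  have hnpos : 0 < n := by omega
  have hvval : ∀ (m : ℕ) (hm : m < n),
      v ⟨m, hm⟩ = ((-1)^(n+1) * (-1)^m * (pZ m : ℚ)) / (D : ℚ) := by
    intro m hm
    rw [hv]
  have hvi : ∀ i : Fin n, v i = ((-1)^(n+1) * (-1)^(i:ℕ) * (pZ (i:ℕ) : ℚ)) / (D : ℚ) := by
    intro i
    rw [hv]
  have hsign : ((-1:ℚ)^(n+1)) * ((-1:ℚ)^(n-1)) = 1 := by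
    rw [← pow_add, show (n+1) + (n-1) = 2*n by omega, pow_mul]
    norm_num
  funext i
  rw [loop_row hn a A hAdef]
  have hi := i.isLt
  rcases Nat.lt_or_ge ((i:ℕ)) (n-1) with hlt | hge
  · have hmod : ((i:ℕ)+1)%n = (i:ℕ)+1 := Nat.mod_eq_of_lt (by omega)
    have h1 : v ⟨((i:ℕ)+1)%n, Nat.mod_lt _ hnpos⟩
        = ((-1)^(n+1) * (-1)^((i:ℕ)+1) * (pZ ((i:ℕ)+1) : ℚ)) / (D : ℚ) := by
      rw [hvval _ (Nat.mod_lt _ hnpos)]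
      rw [hmod]
    have h2 : pZ ((i:ℕ)+1) = pZ (i:ℕ) * (a i : ℤ) := by
      have h3 := hpZsucc (i:ℕ) i.isLt
      rwa [Fin.eta] at h3
    have hne2 : i ≠ (⟨n-1, by omega⟩ : Fin n) := by
      intro h
      have := congrArg Fin.val h
      simp only [] at this
      omega
    rw [h1, h2, hvi i, Pi.single_apply, if_neg hne2, ← mul_div_assoc, ← add_div,
      div_eq_zero_iff]
    left
    push_cast
    ring
  · have hival : (i:ℕ) = n-1 := by omega
    have hieq : i = (⟨n-1, by omega⟩ : Fin n) := Fin.ext (by simp only []; omega)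
    have hmod : ((i:ℕ)+1)%n = 0 := by
      rw [hival, Nat.sub_add_cancel (by omega), Nat.mod_self]
    have h0 : v ⟨((i:ℕ)+1)%n, Nat.mod_lt _ hnpos⟩ = ((-1)^(n+1) : ℚ) / (D : ℚ) := by
      rw [hvval _ (Nat.mod_lt _ hnpos), hmod, hpZ0]
      norm_num
    have hsucc : pZ n = pZ (n-1) * (a ⟨n-1, by omega⟩ : ℤ) := by
      have h3 := hpZsucc (n-1) (by omega)
      rwa [show n-1+1 = n by omega] at h3
    have halast : a i = a ⟨n-1, by omega⟩ := by
      congr 1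
    rw [h0, hvi i, hival, Pi.single_apply, if_pos hieq, halast, hsign, one_mul,
      ← mul_div_assoc, ← add_div, div_eq_one_iff_eq hDq]
    have hsuccQ : ((pZ n : ℚ)) = (pZ (n-1) : ℚ) * ((a ⟨n-1, by omega⟩ : ℕ) : ℚ) := by
      exact_mod_cast hsucc
    linear_combination -hDcast - hsuccQ

set_option maxHeartbeats 1000000 in
private lemma loop_Urel {n : ℕ} (hn : 2 ≤ n) (a : Fin n → ℕ)
    (A : Matrix (Fin n) (Fin n) ℤ)
    (hAdef : A = Matrix.of fun i j => if j = i then (a i : ℤ) else if (j : ℕ) = ((i : ℕ) + 1) % n then 1 else 0)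
    (B : Matrix (Fin n) (Fin n) ℚ) (hBA : B * ratMat A = 1)
    (U : Fin n → (Fin n → ℚ)) (hU : ∀ j, U j = B *ᵥ Pi.single j 1) :
    ∀ i j : Fin n, (j : ℕ) = (i : ℕ) + 1 →
      U i = Pi.single j 1 - (a j : ℚ) • U j := by
  have hnpos : 0 < n := by omega
  intro i j hij
  have hjlt := j.isLt
  have hcol : ratMat A *ᵥ Pi.single j (1:ℚ)
      = (a j : ℚ) • (Pi.single j 1 : Fin n → ℚ) + (Pi.single i 1 : Fin n → ℚ) := by
    funext i'
    rw [loop_row hn a A hAdef]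
    have hmkj : ∀ (i'' : Fin n), ((⟨((i'':ℕ)+1)%n, Nat.mod_lt _ hnpos⟩ : Fin n) = j) ↔ i'' = i := by
      intro i''
      constructor
      · intro h
        have hval := congrArg Fin.val h
        simp only [] at hval
        refine Fin.ext ?_
        have hi'' := i''.isLt
        rcases Nat.lt_or_ge ((i'':ℕ)+1) n with h1 | h1
        · rw [Nat.mod_eq_of_lt h1] at hval; omega
        · have h2 : (i'':ℕ)+1 = n := by omega
          rw [h2, Nat.mod_self] at hval; omega
      · intro h
        subst h
        refine Fin.ext ?_
        simp only []
        rw [hij] at hjlt ⊢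
        exact Nat.mod_eq_of_lt hjlt
    have hji : j ≠ i := fun h => by rw [h] at hij; omega
    by_cases h1 : i' = j
    · have h2 : ¬((⟨((j:ℕ)+1)%n, Nat.mod_lt _ hnpos⟩ : Fin n) = j) :=
        fun h => loop_mod_ne hn j (congrArg Fin.val h)
      simp [Pi.single_apply, h1, h2, hji]
    · by_cases h2 : i' = i
      · have h3 : (⟨((i:ℕ)+1)%n, Nat.mod_lt _ hnpos⟩ : Fin n) = j := (hmkj i).mpr rfl
        simp [Pi.single_apply, h1, h2, h3, hji.symm]
      · have h3 : ¬((⟨((i':ℕ)+1)%n, Nat.mod_lt _ hnpos⟩ : Fin n) = j) := by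
          rw [hmkj]; exact h2
        simp [Pi.single_apply, h1, h2, h3]
  have hsingle : Pi.single i (1:ℚ)
      = ratMat A *ᵥ Pi.single j 1 - (a j : ℚ) • (Pi.single j 1 : Fin n → ℚ) := by
    rw [hcol]; abel
  rw [hU i, hsingle, sub_eq_add_neg, mulVec_add, mulVec_neg, mulVec_mulVec, hBA, one_mulVec]
  rw [mulVec_smul, ← hU j]
  abel

set_option maxHeartbeats 1000000 in
private lemma loop_key {n : ℕ} (hn : 2 ≤ n) (a : Fin n → ℕ) (U : Fin n → Fin n → ℚ)
    (g : QuotLat n) (v : Fin n → ℚ) (hvU : v = U ⟨n-1, by omega⟩)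
    (hg : g = QuotientAddGroup.mk' (IntLat n) v)
    (hUrel : ∀ (i j : Fin n), (j:ℕ) = (i:ℕ) + 1 → U i = Pi.single j 1 - (a j : ℚ) • U j)
    (hsingle_mem : ∀ (j : Fin n), Pi.single j (1:ℚ) ∈ IntLat n) :
    ∀ j : Fin n, ∃ c : ℤ, QuotientAddGroup.mk' (IntLat n) (U j) = c • g := by
  set π := QuotientAddGroup.mk' (IntLat n) with hπ
  have key : ∀ t : ℕ, t < n → ∃ c : ℤ, π (U ⟨n-1-t, by omega⟩) = c • g := by
    intro t
    induction t with
    | zero =>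
      intro _
      refine ⟨1, ?_⟩
      have h0 : (⟨n-1-0, by omega⟩ : Fin n) = (⟨n-1, by omega⟩ : Fin n) :=
        Fin.ext (Nat.sub_zero _)
      rw [h0, ← hvU, one_smul]
      exact hg.symm
    | succ s ih =>
      intro hs
      obtain ⟨c, hc⟩ := ih (by omega)
      have hjj : ((⟨n-1-s, by omega⟩ : Fin n) : ℕ) = ((⟨n-1-(s+1), by omega⟩ : Fin n) : ℕ) + 1 := by
        simp only []
        omega
      refine ⟨-((a ⟨n-1-s, by omega⟩ : ℤ) * c), ?_⟩
      rw [hUrel _ _ hjj]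
      have h2 : ((a (⟨n-1-s, by omega⟩ : Fin n) : ℚ)) • U ⟨n-1-s, by omega⟩
          = ((a (⟨n-1-s, by omega⟩ : Fin n) : ℤ) : ℚ) • U ⟨n-1-s, by omega⟩ := by push_cast; rfl
      have h3 : π (Pi.single (⟨n-1-s, by omega⟩ : Fin n) (1:ℚ)) = 0 :=
        (QuotientAddGroup.eq_zero_iff _).mpr (hsingle_mem _)
      rw [map_sub, h2, Int.cast_smul_eq_zsmul, map_zsmul, hc, h3]
      rw [smul_smul, zero_sub, neg_smul]
  intro j
  obtain ⟨c, hc⟩ := key (n-1-(j:ℕ)) (by omega)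
  refine ⟨c, ?_⟩
  have hj : (⟨n-1-(n-1-(j:ℕ)), by omega⟩ : Fin n) = j :=
    Fin.ext (by have := j.isLt; simp only []; omega)
  rwa [hj] at hc

private lemma loop_autw_mem {n : ℕ} (A : Matrix (Fin n) (Fin n) ℤ) (x : QuotLat n) :
    x ∈ AutW A ↔ ∃ u, (ratMat A *ᵥ u ∈ IntLat n) ∧ QuotientAddGroup.mk' (IntLat n) u = x := by
  constructor
  · rintro ⟨u, hu, hux⟩
    exact ⟨u, by simpa [Matrix.mulVecLin_apply] using hu, hux⟩
  · rintro ⟨u, hu, hux⟩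
    exact ⟨u, by simpa [Matrix.mulVecLin_apply] using hu, hux⟩

set_option maxHeartbeats 1000000 in
private lemma loop_le {n : ℕ} (A : Matrix (Fin n) (Fin n) ℤ)
    (B : Matrix (Fin n) (Fin n) ℚ) (hBA : B * ratMat A = 1)
    (U : Fin n → (Fin n → ℚ)) (hU : ∀ j, U j = B *ᵥ Pi.single j 1)
    (g : QuotLat n)
    (hUc : ∀ j : Fin n, ∃ c : ℤ, QuotientAddGroup.mk' (IntLat n) (U j) = c • g) :
    AutW A ≤ AddSubgroup.zmultiples g := by
  classical
  set π := QuotientAddGroup.mk' (IntLat n) with hπ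
  intro x hx
  rw [loop_autw_mem] at hx
  obtain ⟨u, hu, hux⟩ := hx
  choose m hm using hu
  choose c hc using hUc
  have hsum : u = ∑ j, (m j : ℚ) • U j := by
    have h1 : u = B *ᵥ (ratMat A *ᵥ u) := by rw [mulVec_mulVec, hBA, one_mulVec]
    have h2 : ratMat A *ᵥ u = ∑ j, Pi.single j ((m j : ℚ)) := by
      rw [Finset.univ_sum_single (fun i => ((m i : ℚ)))]
      exact funext hm
    rw [h1, h2]
    have hlin := map_sum B.mulVecLin (fun j : Fin n => Pi.single j ((m j : ℚ))) Finset.univ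
    simp only [Matrix.mulVecLin_apply] at hlin
    rw [hlin]
    refine Finset.sum_congr rfl fun j _ => ?_
    have h3 : Pi.single j ((m j : ℚ)) = (m j : ℚ) • (Pi.single j 1 : Fin n → ℚ) := by
      rw [← Pi.single_smul, smul_eq_mul, mul_one]
    rw [h3, mulVec_smul, ← hU j]
  refine AddSubgroup.mem_zmultiples_iff.mpr ⟨∑ j, m j * c j, ?_⟩
  rw [← hux, hsum, map_sum]
  have h4 : ∀ j : Fin n, π ((m j : ℚ) • U j) = (m j * c j) • g := by
    intro j
    rw [Int.cast_smul_eq_zsmul, map_zsmul, hc j, smul_smul]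
  rw [Finset.sum_congr rfl (fun j _ => h4 j), ← Finset.sum_smul]

set_option maxHeartbeats 1000000 in
private lemma loop_order {n : ℕ} (hn0 : 0 < n) (D : ℤ) (hDpos : 0 < D)
    (v : Fin n → ℚ) (g : QuotLat n)
    (hg : g = QuotientAddGroup.mk' (IntLat n) v)
    (hint : D • v ∈ IntLat n)
    (hv0 : ∃ e : ℤ, (e = 1 ∨ e = -1) ∧ v ⟨0, hn0⟩ = (e : ℚ)/(D : ℚ)) :
    addOrderOf g = D.toNat := by
  set π := QuotientAddGroup.mk' (IntLat n) with hπ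
  have hDq : ((D:ℚ)) ≠ 0 := Int.cast_ne_zero.mpr (by omega)
  have hDg : D • g = 0 := by
    have h2 : π (D • v) = 0 := (QuotientAddGroup.eq_zero_iff _).mpr hint
    rw [hg, ← map_zsmul, h2]
  have hDT : D.toNat • g = 0 := by
    rw [← natCast_zsmul, Int.toNat_of_nonneg hDpos.le, hDg]
  have hdvd1 : addOrderOf g ∣ D.toNat := addOrderOf_dvd_of_nsmul_eq_zero hDT
  have hDTne : D.toNat ≠ 0 := by omega
  have hM : addOrderOf g • g = 0 := addOrderOf_nsmul_eq_zero g
  have hmem3 : ((addOrderOf g : ℤ) • v) ∈ IntLat n := by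
    have h5 : π ((addOrderOf g : ℤ) • v) = 0 := by
      rw [map_zsmul, ← hg, natCast_zsmul, hM]
    exact (QuotientAddGroup.eq_zero_iff _).mp h5
  obtain ⟨z, hz⟩ := hmem3 ⟨0, hn0⟩
  obtain ⟨e, he, hv0'⟩ := hv0
  have hz2 : ((addOrderOf g : ℤ) • v) ⟨0, hn0⟩ = (addOrderOf g : ℚ) * v ⟨0, hn0⟩ := by
    rw [Pi.smul_apply, zsmul_eq_mul]
    push_cast
    ring
  rw [hz2, hv0'] at hz
  have hz3 : (addOrderOf g : ℚ) * (e : ℚ) = (z : ℚ) * (D : ℚ) := by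
    field_simp at hz
    linarith [hz]
  have hz4 : (addOrderOf g : ℤ) * e = z * D := by
    exact_mod_cast hz3
  have hdvd2 : D ∣ (addOrderOf g : ℤ) := by
    have h6 : D ∣ (addOrderOf g : ℤ) * e := Dvd.intro_left z hz4.symm
    rcases he with he1 | he1
    · rwa [he1, mul_one] at h6
    · rw [he1, mul_neg_one] at h6
      exact (dvd_neg).mp h6
  have hdvd2' : D.toNat ∣ addOrderOf g := by
    have h7 : (D.toNat : ℤ) ∣ (addOrderOf g : ℤ) := by
      rwa [Int.toNat_of_nonneg hDpos.le]
    exact_mod_cast h7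
  exact Nat.dvd_antisymm hdvd1 hdvd2'


set_option maxHeartbeats 2000000 in
/-- For the loop potential, Aut(W) = A⁻¹ℤ^n/ℤ^n is cyclic of
order a₁⋯aₙ + (−1)^{n+1}. -/
theorem stmt_5 (n : ℕ) (hn : 2 ≤ n) (a : Fin n → ℕ) (ha : ∀ i, 1 ≤ a i)
    (A : Matrix (Fin n) (Fin n) ℤ)
    (hAdef : A = Matrix.of fun i j => if j = i then (a i : ℤ) else if (j : ℕ) = ((i : ℕ) + 1) % n then 1 else 0)
    (hA : A.det ≠ 0) :
    IsAddCyclic (AutW A) ∧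
      ((Nat.card (AutW A) : ℤ) = (∏ i, (a i : ℤ)) + (-1) ^ (n + 1)) := by
  classical
  have hnpos : 0 < n := by omega
  set P : ℤ := ∏ i, (a i : ℤ) with hP
  set D : ℤ := P + (-1)^(n+1) with hDdef
  clear_value P D
  have hP1 : 1 ≤ P := by
    rw [hP]
    have h1 : (1:ℤ) = ∏ _i : Fin n, (1:ℤ) := by simp
    rw [h1]
    exact Finset.prod_le_prod (fun i _ => by norm_num) (fun i _ => by exact_mod_cast ha i)
  have hD0 : D ≠ 0 := by
    rw [hDdef, hP]
    exact loop_D_ne hn a ha A hAdef hA (hP ▸ hP1)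
  have hDpos : 0 < D := by
    rcases Nat.even_or_odd n with he | ho
    · have h1 : (-1 : ℤ)^(n+1) = -1 := Odd.neg_one_pow (Even.add_one he)
      rw [hDdef, h1] at hD0 ⊢; omega
    · have h1 : (-1 : ℤ)^(n+1) = 1 := Even.neg_one_pow (Odd.add_one ho)
      rw [hDdef, h1]; omega
  have hDq : ((D : ℚ)) ≠ 0 := Int.cast_ne_zero.mpr hD0
  have hdetq : (ratMat A).det ≠ 0 := by
    have h1 : (ratMat A).det = ((A.det : ℚ)) := by
      rw [show ratMat A = (Int.castRingHom ℚ).mapMatrix A from rfl, ← RingHom.map_det]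
      rfl
    rw [h1]
    exact_mod_cast hA
  have hdetu : IsUnit (ratMat A).det := isUnit_iff_ne_zero.mpr hdetq
  obtain ⟨B, hAB, hBA⟩ : ∃ B, ratMat A * B = 1 ∧ B * ratMat A = 1 :=
    ⟨(ratMat A)⁻¹, Matrix.mul_nonsing_inv _ hdetu, Matrix.nonsing_inv_mul _ hdetu⟩
  -- the product function
  set pZ : ℕ → ℤ := fun m => ∏ k ∈ Finset.range m, (a ⟨k % n, Nat.mod_lt _ hnpos⟩ : ℤ) with hpZ
  have hpZsucc : ∀ m : ℕ, ∀ hm : m < n, pZ (m+1) = pZ m * (a ⟨m, hm⟩ : ℤ) := by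
    intro m hm
    have hmk : (⟨m % n, Nat.mod_lt _ hnpos⟩ : Fin n) = ⟨m, hm⟩ := Fin.ext (Nat.mod_eq_of_lt hm)
    simp only [hpZ]
    rw [Finset.prod_range_succ, hmk]
  have hpZ0 : pZ 0 = 1 := by simp [hpZ]
  have hpZn : pZ n = P := by
    rw [hP]
    simp only [hpZ]
    rw [← Fin.prod_univ_eq_prod_range (fun k => (a ⟨k % n, Nat.mod_lt _ hnpos⟩ : ℤ)) n]
    refine Finset.prod_congr rfl fun i _ => ?_
    have h1 : (⟨(i:ℕ) % n, Nat.mod_lt _ hnpos⟩ : Fin n) = i := Fin.ext (Nat.mod_eq_of_lt i.isLt)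
    rw [h1]
  clear_value pZ
  have hDcast : (D : ℚ) = (pZ n : ℚ) + (-1)^(n+1) := by
    rw [hDdef, ← hpZn]
    push_cast
    ring
  set v : Fin n → ℚ := fun i => ((-1)^(n+1) * (-1)^(i:ℕ) * (pZ i : ℚ)) / (D : ℚ) with hv
  clear_value v
  have hAv : ratMat A *ᵥ v = Pi.single (⟨n-1, by omega⟩ : Fin n) 1 :=
    loop_Av hn a A hAdef D hDq pZ hpZsucc hpZ0 hDcast v hv
  obtain ⟨U, hU⟩ : ∃ U : Fin n → (Fin n → ℚ), ∀ j, U j = B *ᵥ Pi.single j 1 :=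
    ⟨fun j => B *ᵥ Pi.single j 1, fun _ => rfl⟩
  have hvU : v = U ⟨n-1, by omega⟩ := by
    rw [hU, ← hAv, mulVec_mulVec, hBA, one_mulVec]
  have hUrel := loop_Urel hn a A hAdef B hBA U hU
  set π := QuotientAddGroup.mk' (IntLat n) with hπ
  set g : QuotLat n := π v with hg
  clear_value g
  have hsingle_mem : ∀ (j : Fin n), Pi.single j (1:ℚ) ∈ IntLat n := by
    intro j i
    refine ⟨if i = j then 1 else 0, ?_⟩
    by_cases h : i = j <;> simp [Pi.single_apply, h]
  have hUc : ∀ j : Fin n, ∃ c : ℤ, π (U j) = c • g :=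
    loop_key hn a U g v hvU hg hUrel hsingle_mem
  have hgmem : g ∈ AutW A := by
    rw [loop_autw_mem]
    exact ⟨v, by rw [hAv]; exact hsingle_mem _, hg.symm⟩
  have hle : AutW A ≤ AddSubgroup.zmultiples g := loop_le A B hBA U hU g hUc
  have hEq : AutW A = AddSubgroup.zmultiples g :=
    le_antisymm hle ((AddSubgroup.zmultiples_le).mpr hgmem)
  have hvval : ∀ (m : ℕ) (hm : m < n),
      v ⟨m, hm⟩ = ((-1)^(n+1) * (-1)^m * (pZ m : ℚ)) / (D : ℚ) := by
    intro m hm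
    rw [hv]
  have hint : D • v ∈ IntLat n := by
    intro i
    refine ⟨(-1)^(n+1) * (-1)^(i:ℕ) * pZ i, ?_⟩
    have h1 : (D • v) i = (D : ℚ) * v i := by
      rw [Pi.smul_apply, zsmul_eq_mul]
    rw [h1, hv]
    push_cast
    field_simp
  have hv0 : ∃ e : ℤ, (e = 1 ∨ e = -1) ∧ v ⟨0, hnpos⟩ = (e : ℚ)/(D : ℚ) := by
    rcases Nat.even_or_odd (n+1) with he | ho
    · refine ⟨1, Or.inl rfl, ?_⟩
      rw [hvval 0 hnpos, hpZ0, Even.neg_one_pow he]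
      norm_num
    · refine ⟨-1, Or.inr rfl, ?_⟩
      rw [hvval 0 hnpos, hpZ0, Odd.neg_one_pow ho]
      push_cast
      ring
  have horder : addOrderOf g = D.toNat := loop_order hnpos D hDpos v g hg hint hv0
  constructor
  · constructor
    refine ⟨⟨g, hgmem⟩, fun y => ?_⟩
    have hy : (y : QuotLat n) ∈ AddSubgroup.zmultiples g := hEq ▸ y.2
    obtain ⟨k, hk⟩ := AddSubgroup.mem_zmultiples_iff.mp hy
    exact AddSubgroup.mem_zmultiples_iff.mpr ⟨k, Subtype.ext (by simpa using hk)⟩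
  · have hcard : Nat.card (AutW A) = D.toNat := by
      rw [hEq, Nat.card_zmultiples, horder]
    rw [hcard, Int.toNat_of_nonneg hDpos.le]
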